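/- Suppose b_k > 0 with b_k ~ t_k/log t_k and d_k > 0 with d_k ~ (log k)^{3/4}·exp(√(log t_{k+1}/6.315)), where t_k ~ k log k. Then ((b + b_k)/(b + d_k))^{ξ+k−1} → ∞ as k → ∞ for any fixed b ≥ 0, ξ ≥ 0. -/

import Mathlib

open Filter

private lemma sqrtLog_tendsto :
    Tendsto (fun k : ℕ => Real.exp (Real.sqrt (Real.log k)) / 4) atTop atTop := by
  apply Tendsto.atTop_div_const (by norm_num : (0:ℝ) < 4)
  apply Real.tendsto_exp_atTop.comp
  have h1 : Tendsto Real.sqrt atTop atTop :=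
    (tendsto_rpow_atTop (by norm_num : (0:ℝ) < 1/2)).congr
      (fun x => (Real.sqrt_eq_rpow x).symm)
  exact h1.comp (Real.tendsto_log_atTop.comp tendsto_natCast_atTop_atTop)

private lemma pkg (t : ℕ → ℝ) (ht : ∀ k, 0 < t k)
    (htasymp : Tendsto (fun k : ℕ => t k / (k * Real.log k)) atTop (nhds 1)) :
    ∀ᶠ k : ℕ in atTop, 81 ≤ Real.log k ∧ 16 ≤ (k : ℝ) ∧
      1 ≤ Real.log (t k) ∧ Real.log (t k) ≤ 2 * Real.log k ∧
      (k : ℝ) / 4 ≤ t k / Real.log (t k) := by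
  have hlog : Tendsto (fun k : ℕ => Real.log k) atTop atTop :=
    Real.tendsto_log_atTop.comp tendsto_natCast_atTop_atTop
  filter_upwards [hlog.eventually_ge_atTop 81,
    (tendsto_natCast_atTop_atTop (R := ℝ)).eventually_ge_atTop 16,
    htasymp.eventually_const_le (by norm_num : (1:ℝ)/2 < 1),
    htasymp.eventually_le_const (by norm_num : (1:ℝ) < 2)]
    with k hx hk16 hlo hhi
  set x := Real.log (k : ℝ) with hxdef
  have hx0 : (0:ℝ) < x := by linarith
  have hk0 : (0:ℝ) < (k : ℝ) := by linarith
  have hkx : (0:ℝ) < (k : ℝ) * x := by positivity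
  have htlo : 1/2 * ((k : ℝ) * x) ≤ t k := (le_div_iff₀ hkx).mp hlo
  have hthi : t k ≤ 2 * ((k : ℝ) * x) := by
    have := (div_le_iff₀ hkx).mp hhi; linarith
  have h648 : (648:ℝ) ≤ t k := by nlinarith
  have hlt1 : 1 ≤ Real.log (t k) := by
    rw [Real.le_log_iff_exp_le (ht k)]
    have := Real.exp_one_lt_d9
    linarith
  have hlt2 : Real.log (t k) ≤ 2 * x := by
    have h1 : Real.log (t k) ≤ Real.log (2 * ((k : ℝ) * x)) :=
      Real.log_le_log (ht k) hthi
    rw [Real.log_mul (by norm_num) (ne_of_gt hkx),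
      Real.log_mul (ne_of_gt hk0) (ne_of_gt hx0)] at h1
    have h2 : Real.log 2 ≤ 1 := by linarith [Real.log_le_sub_one_of_pos (by norm_num : (0:ℝ) < 2)]
    have h3 : Real.log x ≤ x - 1 := Real.log_le_sub_one_of_pos hx0
    linarith
  refine ⟨hx, hk16, hlt1, hlt2, ?_⟩
  have hq : (k : ℝ) / 4 = (1/2 * ((k : ℝ) * x)) / (2 * x) := by
    field_simp; ring
  rw [hq]
  exact div_le_div₀ (ht k).le htlo (by linarith) hlt2

theorem stmt16 (b ξ : ℝ) (hb : 0 ≤ b) (hξ : 0 ≤ ξ)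
    (t bs ds : ℕ → ℝ) (ht : ∀ k, 0 < t k) (hbs : ∀ k, 0 < bs k) (hds : ∀ k, 0 < ds k)
    (htasymp : Tendsto (fun k : ℕ => t k / (k * Real.log k)) atTop (nhds 1))
    (hbasymp : Tendsto (fun k : ℕ => bs k / (t k / Real.log (t k))) atTop (nhds 1))
    (hdasymp : Tendsto (fun k : ℕ =>
        ds k / (Real.log k ^ ((3 : ℝ) / 4) *
          Real.exp (Real.sqrt (Real.log (t (k + 1)) / 6.315)))) atTop (nhds 1)) :
    Tendsto (fun k : ℕ => ((b + bs k) / (b + ds k)) ^ (ξ + k - 1 : ℝ)) atTop atTop := by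
  have hlog : Tendsto (fun k : ℕ => Real.log k) atTop atTop :=
    Real.tendsto_log_atTop.comp tendsto_natCast_atTop_atTop
  set B : ℕ → ℝ := fun k => t k / Real.log (t k) with hBdef
  set D : ℕ → ℝ := fun k => Real.log k ^ ((3 : ℝ) / 4) *
      Real.exp (Real.sqrt (Real.log (t (k + 1)) / 6.315)) with hDdef
  have hpkg := pkg t ht htasymp
  have hpkg' : ∀ᶠ k : ℕ in atTop, 81 ≤ Real.log ((k + 1 : ℕ) : ℝ) ∧ 16 ≤ ((k + 1 : ℕ) : ℝ) ∧
      1 ≤ Real.log (t (k + 1)) ∧ Real.log (t (k + 1)) ≤ 2 * Real.log ((k + 1 : ℕ) : ℝ) ∧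
      ((k + 1 : ℕ) : ℝ) / 4 ≤ t (k + 1) / Real.log (t (k + 1)) :=
    (tendsto_add_atTop_nat 1).eventually hpkg
  -- Step 1: B/D → ∞
  have hBD : Tendsto (fun k => B k / D k) atTop atTop := by
    apply tendsto_atTop_mono' atTop _ sqrtLog_tendsto
    filter_upwards [hpkg, hpkg'] with k hP hP'
    obtain ⟨hx, hk16, hlt1, hlt2, hBlo⟩ := hP
    obtain ⟨hx', hk16', hlt1', hlt2', hB'⟩ := hP'
    set x := Real.log (k : ℝ) with hxdef
    have hx0 : (0:ℝ) < x := by linarith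
    have hk0 : (0:ℝ) < (k : ℝ) := by linarith
    -- log t (k+1) ≤ 4 x
    have hlk1 : Real.log ((k + 1 : ℕ) : ℝ) ≤ 2 * x := by
      have hle : ((k + 1 : ℕ) : ℝ) ≤ ((k : ℝ)) ^ (2 : ℕ) := by push_cast; nlinarith
      have := Real.log_le_log (by positivity) hle
      rwa [Real.log_pow] at this
      
    have hlt4 : Real.log (t (k + 1)) ≤ 4 * x := by linarith
    -- sqrt bound
    have hs_le : Real.sqrt (Real.log (t (k + 1)) / 6.315) ≤ Real.sqrt x := by
      apply Real.sqrt_le_sqrt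
      rw [div_le_iff₀ (by norm_num : (0:ℝ) < 6.315)]
      nlinarith
    -- x^(3/4) ≤ exp(sqrt x)
    have h34 : x ^ ((3:ℝ)/4) ≤ Real.exp (Real.sqrt x) := by
      rw [Real.rpow_def_of_pos hx0]
      apply Real.exp_le_exp.mpr
      have hlogx : Real.log x ≤ 4 * x ^ ((1:ℝ)/4) := by
        have := Real.log_le_rpow_div hx0.le (by norm_num : (0:ℝ) < 1/4)
        rw [div_div_eq_mul_div] at this
        linarith [this]
      have h3 : (3:ℝ) ≤ x ^ ((1:ℝ)/4) := by
        calc (3:ℝ) = (81:ℝ) ^ ((1:ℝ)/4) := by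
              rw [show (81:ℝ) = 3 ^ (4:ℕ) by norm_num, ← Real.rpow_natCast 3 4,
                ← Real.rpow_mul (by norm_num : (0:ℝ) ≤ 3)]
              norm_num
          _ ≤ x ^ ((1:ℝ)/4) := Real.rpow_le_rpow (by norm_num) hx (by norm_num)
      have hqq : x ^ ((1:ℝ)/4) * x ^ ((1:ℝ)/4) = Real.sqrt x := by
        rw [← Real.rpow_add hx0, Real.sqrt_eq_rpow]; norm_num
      nlinarith
    have hDpos : 0 < D k := mul_pos (Real.rpow_pos_of_pos hx0 _) (Real.exp_pos _)
    have hD_le : D k ≤ Real.exp (Real.sqrt x) * Real.exp (Real.sqrt x) :=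
      mul_le_mul h34 (Real.exp_le_exp.mpr hs_le) (Real.exp_pos _).le (Real.exp_pos _).le
    have hs9 : 9 ≤ Real.sqrt x := by
      have h81 : Real.sqrt 81 = 9 := by
        rw [show (81:ℝ) = 9 ^ 2 by norm_num, Real.sqrt_sq (by norm_num : (0:ℝ) ≤ 9)]
      calc (9:ℝ) = Real.sqrt 81 := h81.symm
        _ ≤ Real.sqrt x := Real.sqrt_le_sqrt hx
    have hxs : Real.sqrt x * Real.sqrt x = x := Real.mul_self_sqrt hx0.le
    have hkexp : (k : ℝ) = Real.exp x := (Real.exp_log hk0).symm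
    have key : Real.exp (Real.sqrt x) * (Real.exp (Real.sqrt x) * Real.exp (Real.sqrt x))
        ≤ (k : ℝ) := by
      rw [← Real.exp_add, ← Real.exp_add, hkexp]
      apply Real.exp_le_exp.mpr
      nlinarith
    calc Real.exp (Real.sqrt (Real.log (k:ℕ))) / 4
        ≤ ((k : ℝ) / 4) / (Real.exp (Real.sqrt x) * Real.exp (Real.sqrt x)) := by
          rw [div_div, div_le_div_iff₀ (by norm_num) (by positivity)]
          nlinarith [Real.exp_pos (Real.sqrt x), key]
      _ ≤ B k / D k :=
          div_le_div₀ (le_trans (by positivity) hBlo) hBlo hDpos hD_le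
  -- Step 2: D → ∞
  have hDtop : Tendsto D atTop atTop := by
    apply tendsto_atTop_mono' atTop _
      ((tendsto_rpow_atTop (by norm_num : (0:ℝ) < 3/4)).comp hlog)
    filter_upwards [hlog.eventually_ge_atTop 0] with k h0
    have : Real.log (k:ℕ) ^ ((3:ℝ)/4) * 1 ≤ D k :=
      mul_le_mul_of_nonneg_left (Real.one_le_exp (Real.sqrt_nonneg _))
        (Real.rpow_nonneg h0 _)
    simpa using this
  -- Step 3: ds → ∞
  have hdstop : Tendsto ds atTop atTop := by
    have h1 : Tendsto (fun k => ds k / D k * D k) atTop atTop :=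
      Tendsto.pos_mul_atTop one_pos hdasymp hDtop
    apply h1.congr'
    filter_upwards [hlog.eventually_gt_atTop 0] with k hk0
    have hDpos : 0 < D k := mul_pos (Real.rpow_pos_of_pos hk0 _) (Real.exp_pos _)
    exact div_mul_cancel₀ _ hDpos.ne'
  -- Step 4: bs/ds → ∞
  have hbsds : Tendsto (fun k => bs k / ds k) atTop atTop := by
    have hf3 : Tendsto (fun k => D k / ds k) atTop (nhds 1) := by
      have := hdasymp.inv₀ one_ne_zero
      simpa [inv_div] using this
    have hmid : Tendsto (fun k => bs k / B k * (B k / D k) * (D k / ds k)) atTop atTop :=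
      Tendsto.atTop_mul_pos one_pos (Tendsto.pos_mul_atTop one_pos hbasymp hBD) hf3
    apply hmid.congr'
    filter_upwards [hpkg, hlog.eventually_gt_atTop 0] with k hP hk0
    obtain ⟨hx, hk16, hlt1, hlt2, hBlo⟩ := hP
    have hBpos : 0 < B k := div_pos (ht k) (by linarith)
    have hDpos : 0 < D k := mul_pos (Real.rpow_pos_of_pos hk0 _) (Real.exp_pos _)
    field_simp
  -- Step 5: (b+bs)/(b+ds) → ∞
  have hR : Tendsto (fun k => (b + bs k) / (b + ds k)) atTop atTop := by
    apply tendsto_atTop_mono' atTop _ (hbsds.atTop_div_const two_pos)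
    filter_upwards [hdstop.eventually_ge_atTop b] with k hbds
    have h1 : bs k / ds k / 2 = bs k / (2 * ds k) := by
      rw [div_div, mul_comm]
    rw [h1]
    exact div_le_div₀ (by linarith [(hbs k).le]) (by linarith) (by linarith [hds k])
      (by linarith)
  -- Step 6: conclusion
  apply tendsto_atTop_mono' atTop _ hR
  filter_upwards [hR.eventually_ge_atTop 1, eventually_ge_atTop 2] with k hR1 hk2
  have hexp : (1:ℝ) ≤ ξ + k - 1 := by
    have : (2:ℝ) ≤ (k : ℝ) := by exact_mod_cast hk2
    linarith
  calc (b + bs k) / (b + ds k) = ((b + bs k) / (b + ds k)) ^ (1:ℝ) := (Real.rpow_one _).symm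
    _ ≤ ((b + bs k) / (b + ds k)) ^ (ξ + k - 1 : ℝ) :=
        Real.rpow_le_rpow_of_exponent_le hR1 hexp
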